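/- The Anderson ring R[X]_A has finite character (i.e., every nonzero nonunit element of R[X]_A belongs to only finitely many maximal ideals of R[X]_A) if and only if R has only finitely many maximal ideals. -/

import Mathlib

open Polynomial

/-- The multiplicative set `A = {f ∈ R[X] : f(0) = 1}` of polynomials
with constant term `1`. -/
def andersonSubmonoid (R : Type*) [CommRing R] : Submonoid (Polynomial R) where
  carrier := {f | f.coeff 0 = 1}
  one_mem' := by simp
  mul_mem' := by
    intro a b ha hb
    simp only [Set.mem_setOf_eq, Polynomial.mul_coeff_zero] at *
    rw [ha, hb, mul_one]

/-- The Anderson ring `R[X]_A`, the localization of `R[X]` at `A`. -/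
abbrev AndersonRing (R : Type*) [CommRing R] := Localization (andersonSubmonoid R)

/-- The canonical ring homomorphism `R → R[X]_A`. -/
noncomputable def andersonMap (R : Type*) [CommRing R] : R →+* AndersonRing R :=
  (algebraMap (Polynomial R) (AndersonRing R)).comp Polynomial.C

section Aux

variable (R : Type*) [CommRing R]

lemma anderson_cc_surj : Function.Surjective (constantCoeff : Polynomial R →+* R) :=
  fun r => ⟨C r, by simp [constantCoeff_apply]⟩

lemma mem_andersonSubmonoid {f : Polynomial R} :
    f ∈ andersonSubmonoid R ↔ constantCoeff f = 1 := Iff.rfl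

lemma anderson_disjoint_comap {M : Ideal R} (hM : M ≠ ⊤) :
    Disjoint ↑(andersonSubmonoid R) (↑(M.comap (constantCoeff : Polynomial R →+* R)) : Set (Polynomial R)) := by
  rw [Set.disjoint_left]
  intro f hf hf'
  rw [SetLike.mem_coe, Ideal.mem_comap] at hf'
  rw [SetLike.mem_coe, mem_andersonSubmonoid] at hf
  exact hM (Ideal.eq_top_iff_one M |>.mpr (hf ▸ hf'))

/-- Key structure lemma : every maximal ideal of the Anderson ring contracts to
`ev₀⁻¹(M)` for some maximal ideal `M` of `R`. -/
lemma anderson_comap_eq (Q : Ideal (AndersonRing R)) (hQ : Q.IsMaximal) :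
    ∃ M : Ideal R, M.IsMaximal ∧
      Q.comap (algebraMap (Polynomial R) (AndersonRing R)) =
        M.comap (constantCoeff : Polynomial R →+* R) := by
  set alg := algebraMap (Polynomial R) (AndersonRing R) with halg
  obtain ⟨hPprime, hPdisj⟩ :=
    (IsLocalization.isPrime_iff_isPrime_disjoint (andersonSubmonoid R) _ Q).mp hQ.isPrime
  set P := Q.comap alg with hP
  have hproper : P.map (constantCoeff : Polynomial R →+* R) ≠ ⊤ := by
    intro h
    have h1 : (1 : R) ∈ P.map (constantCoeff : Polynomial R →+* R) := h ▸ Submodule.mem_top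
    obtain ⟨f, hf, hf1⟩ := (Ideal.mem_map_iff_of_surjective _ (anderson_cc_surj R)).mp h1
    exact Set.disjoint_left.mp hPdisj ((mem_andersonSubmonoid R).mpr hf1) hf
  obtain ⟨M, hMmax, hM⟩ := Ideal.exists_le_maximal _ hproper
  refine ⟨M, hMmax, ?_⟩
  have hPle : P ≤ M.comap (constantCoeff : Polynomial R →+* R) := fun x hx =>
    hM (Ideal.mem_map_of_mem _ hx)
  have hprime : (M.comap (constantCoeff : Polynomial R →+* R)).IsPrime :=
    hMmax.isPrime.comap _
  have hdisj := anderson_disjoint_comap R hMmax.ne_top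
  have hQle : Q ≤ (M.comap (constantCoeff : Polynomial R →+* R)).map alg := by
    calc Q = P.map alg := (IsLocalization.map_comap (andersonSubmonoid R) _ Q).symm
    _ ≤ _ := Ideal.map_mono hPle
  have hne : ((M.comap (constantCoeff : Polynomial R →+* R)).map alg) ≠ ⊤ :=
    (IsLocalization.isPrime_of_isPrime_disjoint (andersonSubmonoid R) _ _ hprime hdisj).ne_top
  have hQeq := hQ.eq_of_le hne hQle
  rw [hP, hQeq,
    (Ideal.under_def _ _).symm.trans
      (IsLocalization.comap_map_of_isPrime_disjoint (andersonSubmonoid R) (AndersonRing R) hprime hdisj)]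

/-- For each maximal ideal `M` of `R`, the extension of `ev₀⁻¹(M)` to the
Anderson ring is maximal. -/
lemma anderson_map_maximal (M : Ideal R) (hM : M.IsMaximal) :
    (Ideal.map (algebraMap (Polynomial R) (AndersonRing R))
      (M.comap (constantCoeff : Polynomial R →+* R))).IsMaximal := by
  set alg := algebraMap (Polynomial R) (AndersonRing R) with halg
  set P := M.comap (constantCoeff : Polynomial R →+* R) with hPdef
  have hprime : P.IsPrime := hM.isPrime.comap _
  have hdisj := anderson_disjoint_comap R hM.ne_top
  have hQprime := IsLocalization.isPrime_of_isPrime_disjoint (andersonSubmonoid R)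
    (AndersonRing R) P hprime hdisj
  obtain ⟨Q', hQ', hle⟩ := Ideal.exists_le_maximal _ hQprime.ne_top
  obtain ⟨M', hM', hc⟩ := anderson_comap_eq R Q' hQ'
  have h1 : P ≤ M'.comap (constantCoeff : Polynomial R →+* R) := by
    calc P = (P.map alg).comap alg :=
      (IsLocalization.comap_map_of_isPrime_disjoint (andersonSubmonoid R) _ hprime hdisj).symm
    _ ≤ Q'.comap alg := Ideal.comap_mono hle
    _ = _ := hc
  have hMM' : M ≤ M' := by
    intro r hr
    have hCr : C r ∈ P := by
      rw [hPdef, Ideal.mem_comap]; simpa [constantCoeff_apply] using hr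
    have := h1 hCr
    rw [Ideal.mem_comap] at this
    simpa [constantCoeff_apply] using this
  have hMeq : M = M' := hM.eq_of_le hM'.ne_top hMM'
  have hPQ : P.map alg = Q' := by
    have : P = Q'.comap alg := by rw [hc, ← hMeq]
    rw [this]
    exact IsLocalization.map_comap (andersonSubmonoid R) _ Q'
  rw [hPQ]
  exact hQ'

end Aux

/-- The Anderson ring `R[X]_A` has finite character (every nonzero nonunit lies
in only finitely many maximal ideals) iff `R` has only finitely many maximal
ideals. -/
theorem anderson_finite_character_iff (R : Type*) [CommRing R] :
    (∀ x : AndersonRing R, x ≠ 0 → ¬ IsUnit x →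
      {m : Ideal (AndersonRing R) | m.IsMaximal ∧ x ∈ m}.Finite) ↔
    {M : Ideal R | M.IsMaximal}.Finite := by
  set alg := algebraMap (Polynomial R) (AndersonRing R) with halg
  constructor
  · intro h
    rcases subsingleton_or_nontrivial R with hR | hR
    · refine Set.Finite.subset Set.finite_empty ?_
      intro M hM
      exact absurd (Subsingleton.elim M ⊤) hM.ne_top
    · -- x := image of X
      have hx0 : alg X ≠ 0 := by
        intro hx
        obtain ⟨m, hm⟩ := (IsLocalization.map_eq_zero_iff (andersonSubmonoid R) _ X).mp hx
        have h1 : ((m : Polynomial R) * X).coeff 1 = (m : Polynomial R).coeff 0 :=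
          coeff_mul_X _ 0
        rw [hm, Polynomial.coeff_zero] at h1
        have h2 : (m : Polynomial R).coeff 0 = 1 := m.2
        rw [h2] at h1
        exact one_ne_zero h1.symm
      have hXmem : ∀ (M : Ideal R), X ∈ M.comap (constantCoeff : Polynomial R →+* R) := by
        intro M
        rw [Ideal.mem_comap]
        simp only [constantCoeff_apply, coeff_X_zero]
        exact M.zero_mem
      obtain ⟨M, hM⟩ := Ideal.exists_maximal R
      have hQM := anderson_map_maximal R M hM
      have hxQ : alg X ∈ Ideal.map alg (M.comap (constantCoeff : Polynomial R →+* R)) :=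
        Ideal.mem_map_of_mem _ (hXmem M)
      have hxu : ¬ IsUnit (alg X) := fun hu =>
        hQM.ne_top (Ideal.eq_top_of_isUnit_mem _ hxQ hu)
      have hfin := h _ hx0 hxu
      have hall : {m : Ideal (AndersonRing R) | m.IsMaximal} ⊆
          {m : Ideal (AndersonRing R) | m.IsMaximal ∧ alg X ∈ m} := by
        intro m hm
        refine ⟨hm, ?_⟩
        obtain ⟨M', hM', hc⟩ := anderson_comap_eq R m hm
        have : X ∈ m.comap alg := by rw [hc]; exact hXmem M'
        exact this
      have hmaxfin : {m : Ideal (AndersonRing R) | m.IsMaximal}.Finite := hfin.subset hall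
      refine Set.Finite.subset (hmaxfin.image
        (fun Q => Ideal.map (constantCoeff : Polynomial R →+* R) (Q.comap alg))) ?_
      intro M' hM'
      refine ⟨Ideal.map alg (M'.comap (constantCoeff : Polynomial R →+* R)),
        anderson_map_maximal R M' hM', ?_⟩
      have hprime : (M'.comap (constantCoeff : Polynomial R →+* R)).IsPrime :=
        hM'.isPrime.comap _
      have hdisj := anderson_disjoint_comap R hM'.ne_top
      simp only [halg]
      rw [(Ideal.under_def _ _).symm.trans
      (IsLocalization.comap_map_of_isPrime_disjoint (andersonSubmonoid R) (AndersonRing R) hprime hdisj),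
        Ideal.map_comap_of_surjective _ (anderson_cc_surj R)]
  · intro hfin x hx hxu
    have hsub : {m : Ideal (AndersonRing R) | m.IsMaximal} ⊆
        (fun M : Ideal R => Ideal.map alg (M.comap (constantCoeff : Polynomial R →+* R))) ''
          {M : Ideal R | M.IsMaximal} := by
      intro Q hQ
      obtain ⟨M, hM, hc⟩ := anderson_comap_eq R Q hQ
      refine ⟨M, hM, ?_⟩
      simp only
      rw [← hc]
      exact IsLocalization.map_comap (andersonSubmonoid R) _ Q
    refine ((hfin.image _).subset hsub).subset ?_
    intro m hm
    exact hm.1
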